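/- arXiv:2201.06685 — 3 statements merged into one kernel-verified Lean document; each statement's English description precedes it below -/
import Mathlib

section
/- Let E be a real inner product space, K a complete subspace of E with orthogonal projection P_K, and define for x ∈ E with P_K x ≠ 0 and x − P_K x ≠ 0 the signal-to-artifact ratio SAR(x) = 10·log₁₀(‖P_K x‖² / ‖x − P_K x‖²). Suppose y ∈ K, ŝ ∈ E with P_K ŝ ≠ 0 and ŝ − P_K ŝ ≠ 0, and ⟨ŝ, y⟩ > 0. Then for every ω > 0, SAR(ŝ + ω·y) > SAR(ŝ); i.e., the observation-adding technique strictly improves the signal-to-artifact ratio. -/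
open scoped RealInnerProductSpace

/-- Signal-to-artifact ratio: `SAR(x) = 10·log₁₀(‖P_K x‖² / ‖x − P_K x‖²)`. -/
noncomputable def SAR {E : Type*} [NormedAddCommGroup E] [InnerProductSpace ℝ E]
    (K : Submodule ℝ E) [CompleteSpace K] (x : E) : ℝ :=
  10 * Real.logb 10 (‖(K.orthogonalProjectionOnto x : E)‖ ^ 2 /
    ‖x - (K.orthogonalProjectionOnto x : E)‖ ^ 2)

theorem observation_adding_improves_SAR
    {E : Type*} [NormedAddCommGroup E] [InnerProductSpace ℝ E]
    (K : Submodule ℝ E) [CompleteSpace K]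
    (y sHat : E) (hy : y ∈ K)
    (hP : (K.orthogonalProjectionOnto sHat : E) ≠ 0)
    (hA : sHat - (K.orthogonalProjectionOnto sHat : E) ≠ 0)
    (hpos : ⟪sHat, y⟫ > 0) :
    ∀ ω : ℝ, ω > 0 → SAR K (sHat + ω • y) > SAR K sHat := by
  intro ω hω
  set P := (K.orthogonalProjectionOnto sHat : E) with hPdef
  have hproj : (K.orthogonalProjectionOnto (sHat + ω • y) : E) = P + ω • y := by
    rw [map_add, map_smul]
    have : (K.orthogonalProjectionOnto y : E) = y :=
      K.starProjection_eq_self_iff.mpr hy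
    push_cast
    rw [this]
  have hres : (sHat + ω • y) - (K.orthogonalProjectionOnto (sHat + ω • y) : E)
      = sHat - P := by
    rw [hproj]; abel
  have hinner : ⟪P, y⟫ = ⟪sHat, y⟫ := by
    have horth : ⟪sHat - P, y⟫ = 0 := by
      rw [real_inner_comm]
      exact (K.sub_starProjection_mem_orthogonal sHat) y hy
    have := inner_sub_left (𝕜 := ℝ) sHat P y
    rw [horth] at this
    linarith
  have hy0 : y ≠ 0 := by
    rintro rfl
    simp at hpos
  have hnormgt : ‖P‖ ^ 2 < ‖P + ω • y‖ ^ 2 := by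
    rw [norm_add_sq_real, real_inner_smul_right, hinner, norm_smul]
    have h1 : 0 < 2 * (ω * ⟪sHat, y⟫) := by positivity
    have h2 : 0 ≤ (‖ω‖ * ‖y‖) ^ 2 := by positivity
    linarith
  have hApos : (0:ℝ) < ‖sHat - P‖ ^ 2 := pow_pos (norm_pos_iff.mpr hA) 2
  have hPpos : (0:ℝ) < ‖P‖ ^ 2 := pow_pos (norm_pos_iff.mpr hP) 2
  unfold SAR
  rw [hproj, ← hPdef]
  have hres2 : sHat + ω • y - (P + ω • y) = sHat - P := by abel
  rw [hres2]
  have : ‖P‖ ^ 2 / ‖sHat - P‖ ^ 2 < ‖P + ω • y‖ ^ 2 / ‖sHat - P‖ ^ 2 :=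
    by exact div_lt_div_of_pos_right hnormgt hApos
  have hlog := Real.logb_lt_logb (by norm_num : (1:ℝ) < 10)
    (by positivity) this
  linarith
end

section
/- Let E be a real inner product space, K a complete subspace of E with orthogonal projection P_K, and define for x ∈ E with P_K x ≠ 0 and x − P_K x ≠ 0 the signal-to-artifact ratio SAR(x) = 10·log₁₀(‖P_K x‖² / ‖x − P_K x‖²). Suppose y ∈ K, ŝ ∈ E with P_K ŝ ≠ 0 and ŝ − P_K ŝ ≠ 0, and ω ∈ ℝ is such that P_K ŝ + ω·y ≠ 0. Then the SAR improvement satisfies SAR(ŝ + ω·y) − SAR(ŝ) = 10·log₁₀( 1 + (ω²·‖y‖² + 2ω·⟨ŝ, y⟩) / ‖P_K ŝ‖² ). -/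
open scoped RealInnerProductSpace

/-- Closed-form SAR improvement of observation adding:
`SAR(ŝ + ω·y) − SAR(ŝ) = 10·log₁₀(1 + (ω²‖y‖² + 2ω⟨ŝ,y⟩)/‖P_K ŝ‖²)`. -/
theorem SAR_improvement_closed_form
    {E : Type*} [NormedAddCommGroup E] [InnerProductSpace ℝ E]
    (K : Submodule ℝ E) [CompleteSpace K]
    (y sHat : E) (hy : y ∈ K)
    (hP : (K.orthogonalProjectionOnto sHat : E) ≠ 0)
    (hA : sHat - (K.orthogonalProjectionOnto sHat : E) ≠ 0)
    (ω : ℝ) (hω : (K.orthogonalProjectionOnto sHat : E) + ω • y ≠ 0) :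
    SAR K (sHat + ω • y) - SAR K sHat =
      10 * Real.logb 10
        (1 + (ω ^ 2 * ‖y‖ ^ 2 + 2 * ω * ⟪sHat, y⟫) /
          ‖(K.orthogonalProjectionOnto sHat : E)‖ ^ 2) := by
  have hyproj : K.orthogonalProjectionOnto y = ⟨y, hy⟩ :=
    K.orthogonalProjectionOnto_mem_subspace_eq_self ⟨y, hy⟩
  have hproj : (K.orthogonalProjectionOnto (sHat + ω • y) : E) =
      (K.orthogonalProjectionOnto sHat : E) + ω • y := by
    rw [map_add, map_smul, hyproj]
    rfl
  have hinner : ⟪(K.orthogonalProjectionOnto sHat : E), y⟫ = ⟪sHat, y⟫ := by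
    have := Submodule.inner_starProjection_left_eq_right K sHat y
    rw [Submodule.starProjection_eq_self_iff.2 hy] at this
    exact this
  have hN1 : ‖(K.orthogonalProjectionOnto sHat : E) + ω • y‖ ^ 2 =
      ‖(K.orthogonalProjectionOnto sHat : E)‖ ^ 2 +
        (ω ^ 2 * ‖y‖ ^ 2 + 2 * ω * ⟪sHat, y⟫) := by
    rw [norm_add_sq_real, real_inner_smul_right, hinner, norm_smul]
    simp [mul_pow]
    ring
  set P := (K.orthogonalProjectionOnto sHat : E)
  set A := sHat - P
  have hP2 : (0:ℝ) < ‖P‖ ^ 2 := pow_pos (norm_pos_iff.2 hP) 2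
  have hA2 : (0:ℝ) < ‖A‖ ^ 2 := pow_pos (norm_pos_iff.2 hA) 2
  have hN1pos : (0:ℝ) < ‖P + ω • y‖ ^ 2 := pow_pos (norm_pos_iff.2 hω) 2
  have hart : sHat + ω • y - (P + ω • y) = A := by rw [add_sub_add_right_eq_sub]
  unfold SAR
  rw [hproj, hart]
  have hrhs : 1 + (ω ^ 2 * ‖y‖ ^ 2 + 2 * ω * ⟪sHat, y⟫) / ‖P‖ ^ 2 =
      (‖P + ω • y‖ ^ 2) / ‖P‖ ^ 2 := by
    rw [hN1]; field_simp
  rw [hrhs, ← mul_sub, ← Real.logb_div (by positivity) (by positivity)]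
  have hfold : (‖P + ω • y‖ ^ 2 / ‖A‖ ^ 2) /
      (‖(K.orthogonalProjectionOnto sHat : E)‖ ^ 2 /
        ‖sHat - (K.orthogonalProjectionOnto sHat : E)‖ ^ 2)
      = ‖P + ω • y‖ ^ 2 / ‖P‖ ^ 2 := by
    show (‖P + ω • y‖ ^ 2 / ‖A‖ ^ 2) / (‖P‖ ^ 2 / ‖A‖ ^ 2) = _
    field_simp
  rw [hfold]
end

section
/- Let E be a real inner product space, K a complete subspace of E with orthogonal projection P_K, and define for x ∈ E with P_K x ≠ 0 and x − P_K x ≠ 0 the signal-to-artifact ratio SAR(x) = 10·log₁₀(‖P_K x‖² / ‖x − P_K x‖²). Suppose y ∈ K with y ≠ 0, ŝ ∈ E with ŝ − P_K ŝ ≠ 0, and ⟨ŝ, y⟩ > 0. Then SAR(ŝ + ω·y) tends to +∞ as ω → +∞. -/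
open scoped RealInnerProductSpace

/-- `SAR(ŝ + ω·y) → +∞` as `ω → +∞`. -/
theorem SAR_tendsto_atTop_observation_adding
    {E : Type*} [NormedAddCommGroup E] [InnerProductSpace ℝ E]
    (K : Submodule ℝ E) [CompleteSpace K]
    (y sHat : E) (hy : y ∈ K) (hy0 : y ≠ 0)
    (hA : sHat - (K.orthogonalProjectionOnto sHat : E) ≠ 0)
    (hpos : ⟪sHat, y⟫ > 0) :
    Filter.Tendsto (fun ω : ℝ => SAR K (sHat + ω • y)) Filter.atTop Filter.atTop := by
  set p : E := (K.orthogonalProjectionOnto sHat : E) with hp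
  have hproj : ∀ ω : ℝ, (K.orthogonalProjectionOnto (sHat + ω • y) : E) = p + ω • y := by
    intro ω
    have hyproj : (K.orthogonalProjectionOnto y : E) = y := by
      have := Submodule.orthogonalProjectionOnto_mem_subspace_eq_self (⟨y, hy⟩ : K)
      simpa using congrArg (fun z : K => (z : E)) this
    rw [map_add, map_smul]
    push_cast
    rw [hyproj]
  have heq : ∀ ω : ℝ, SAR K (sHat + ω • y)
      = 10 * Real.logb 10 (‖p + ω • y‖ ^ 2 / ‖sHat - p‖ ^ 2) := by
    intro ω
    unfold SAR
    rw [hproj ω]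
    congr 2
    abel_nf
  have hc : (0 : ℝ) < ‖sHat - p‖ ^ 2 := pow_pos (norm_pos_iff.mpr hA) 2
  have hy0' : (0 : ℝ) < ‖y‖ := norm_pos_iff.mpr hy0
  have hnorm : Filter.Tendsto (fun ω : ℝ => ‖p + ω • y‖) Filter.atTop Filter.atTop := by
    apply Filter.tendsto_atTop_mono (f := fun ω : ℝ => ω * ‖y‖ - ‖p‖)
    · intro ω
      have h1 : ‖ω • y‖ - ‖p‖ ≤ ‖p + ω • y‖ := by
        have h2 : ‖(p + ω • y) - p‖ ≤ ‖p + ω • y‖ + ‖p‖ := norm_sub_le _ _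
        rw [add_sub_cancel_left] at h2
        linarith
      calc ω * ‖y‖ - ‖p‖ ≤ |ω| * ‖y‖ - ‖p‖ := by
            have := le_abs_self ω
            nlinarith
        _ = ‖ω • y‖ - ‖p‖ := by rw [norm_smul, Real.norm_eq_abs]
        _ ≤ ‖p + ω • y‖ := h1
    · exact Filter.tendsto_atTop_add_const_right _ _
        (Filter.Tendsto.atTop_mul_const hy0' Filter.tendsto_id)
  have hsq : Filter.Tendsto (fun ω : ℝ => ‖p + ω • y‖ ^ 2 / ‖sHat - p‖ ^ 2)
      Filter.atTop Filter.atTop := by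
    apply Filter.Tendsto.atTop_div_const hc
    exact (Filter.tendsto_pow_atTop (two_ne_zero)).comp hnorm
  have hlog : Filter.Tendsto (fun ω : ℝ =>
      10 * Real.logb 10 (‖p + ω • y‖ ^ 2 / ‖sHat - p‖ ^ 2)) Filter.atTop Filter.atTop := by
    apply Filter.Tendsto.const_mul_atTop (by norm_num : (0:ℝ) < 10)
    exact (Real.tendsto_logb_atTop (by norm_num : (1:ℝ) < 10)).comp hsq
  exact hlog.congr fun ω => (heq ω).symm
end
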